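/- arXiv:1602.01532 — 2 statements merged into one kernel-verified Lean document; each statement's English description precedes it below -/
import Mathlib

section
/- Let $R\subset\mathbb{R}^2$ be a compact rectangle and $f:\mathbb{R}^2\to\mathbb{R}$ nonnegative and integrable on $R$. Fix real constants $q,\lambda,h$ and fix $y_0\in\mathbb{R}$. Define $\bar L(x,y;x_0)=\big(q+\lambda((x-x_0)^2+(y-y_0)^2)\big)\big((x-x_0)^2+(y-y_0)^2+h^2\big)$ and $G(x_0)=\int_R \bar L(x,y;x_0)f(x,y)\,dx\,dy$. Then $G$ is differentiable on $\mathbb{R}$ and $G'(x_0)=a_1x_0^3+a_2x_0^2+a_3x_0+a_4$, where, writing $F(u)=\int_R u(x,y)f(x,y)\,dx\,dy$: $a_1=4\lambda F(1)$, $a_2=-12\lambda F(x)$, $a_3=F\big(2q+2\lambda h^2+12\lambda x^2+4\lambda(y-y_0)^2\big)$, and $a_4=-F\big(2qx+2\lambda h^2 x+4\lambda x^3+4\lambda x(y-y_0)^2\big)$. Consequently, $x_0$ is a critical point of $G$ if and only if it is a root of this cubic polynomial. -/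
open MeasureTheory

private lemma mulInt {R : Set (ℝ × ℝ)} (hc : IsCompact R) (hm : MeasurableSet R)
    {f : ℝ × ℝ → ℝ} (hfi : IntegrableOn f R) {g : ℝ × ℝ → ℝ} (hg : Continuous g) :
    IntegrableOn (fun p => g p * f p) R := by
  obtain ⟨C, hC⟩ := hc.exists_bound_of_continuousOn hg.continuousOn
  exact hfi.bdd_mul (hg.aestronglyMeasurable.restrict)
    ((ae_restrict_iff' hm).2 (Filter.Eventually.of_forall hC))

/-- Theorem 2 of the paper (x-coordinate): with the polynomial approximation of the
average path loss, the objective `G` is differentiable and its derivative is a cubic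
polynomial in `x0` whose coefficients are moments of the user density; hence the
critical points of `G` are exactly the roots of that cubic. -/
theorem stmt_11 (xs xs' ys ys' : ℝ) (R : Set (ℝ × ℝ))
    (hR : R = Set.Icc xs xs' ×ˢ Set.Icc ys ys')
    (f : ℝ × ℝ → ℝ)
    (hf0 : ∀ p ∈ R, 0 ≤ f p)
    (hfi : IntegrableOn f R)
    (q l h y0 : ℝ)
    (L : ℝ × ℝ → ℝ → ℝ)
    (hL : ∀ p : ℝ × ℝ, ∀ x0 : ℝ, L p x0 =
      (q + l * ((p.1 - x0) ^ 2 + (p.2 - y0) ^ 2)) *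
        ((p.1 - x0) ^ 2 + (p.2 - y0) ^ 2 + h ^ 2))
    (G : ℝ → ℝ)
    (hG : ∀ x0 : ℝ, G x0 = ∫ p in R, L p x0 * f p)
    (F : ((ℝ × ℝ) → ℝ) → ℝ)
    (hF : ∀ u : (ℝ × ℝ) → ℝ, F u = ∫ p in R, u p * f p)
    (a1 a2 a3 a4 : ℝ)
    (ha1 : a1 = 4 * l * F (fun _ => 1))
    (ha2 : a2 = -12 * l * F (fun p => p.1))
    (ha3 : a3 = F (fun p =>
      2 * q + 2 * l * h ^ 2 + 12 * l * p.1 ^ 2 + 4 * l * (p.2 - y0) ^ 2))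
    (ha4 : a4 = -F (fun p =>
      2 * q * p.1 + 2 * l * h ^ 2 * p.1 + 4 * l * p.1 ^ 3 +
        4 * l * p.1 * (p.2 - y0) ^ 2)) :
    (∀ x0 : ℝ, HasDerivAt G (a1 * x0 ^ 3 + a2 * x0 ^ 2 + a3 * x0 + a4) x0) ∧
    (∀ x0 : ℝ, deriv G x0 = 0 ↔ a1 * x0 ^ 3 + a2 * x0 ^ 2 + a3 * x0 + a4 = 0) := by
  have hc : IsCompact R := by rw [hR]; exact isCompact_Icc.prod isCompact_Icc
  have hm : MeasurableSet R := by rw [hR]; exact measurableSet_Icc.prod measurableSet_Icc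
  -- coefficient functions
  set g0 : ℝ × ℝ → ℝ := fun p =>
    l * (p.1 ^ 2 + (p.2 - y0) ^ 2) ^ 2 + (q + l * h ^ 2) * (p.1 ^ 2 + (p.2 - y0) ^ 2)
      + q * h ^ 2 with hg0
  set g1 : ℝ × ℝ → ℝ := fun p =>
    -4 * l * p.1 * (p.1 ^ 2 + (p.2 - y0) ^ 2) - 2 * p.1 * (q + l * h ^ 2) with hg1
  set g2 : ℝ × ℝ → ℝ := fun p =>
    q + l * h ^ 2 + 6 * l * p.1 ^ 2 + 2 * l * (p.2 - y0) ^ 2 with hg2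
  set g3 : ℝ × ℝ → ℝ := fun p => -4 * l * p.1 with hg3
  set g4 : ℝ × ℝ → ℝ := fun _ => l with hg4
  have c0 : Continuous g0 := by rw [hg0]; fun_prop
  have c1 : Continuous g1 := by rw [hg1]; fun_prop
  have c2 : Continuous g2 := by rw [hg2]; fun_prop
  have c3 : Continuous g3 := by rw [hg3]; fun_prop
  have c4 : Continuous g4 := continuous_const
  have i0 := mulInt hc hm hfi c0
  have i1 := mulInt hc hm hfi c1
  have i2 := mulInt hc hm hfi c2
  have i3 := mulInt hc hm hfi c3
  have i4 := mulInt hc hm hfi c4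
  set I0 := ∫ p in R, g0 p * f p with hI0
  set I1 := ∫ p in R, g1 p * f p with hI1
  set I2 := ∫ p in R, g2 p * f p with hI2
  set I3 := ∫ p in R, g3 p * f p with hI3
  set I4 := ∫ p in R, g4 p * f p with hI4
  have key : ∀ t : ℝ, G t = I0 + I1 * t + I2 * t ^ 2 + I3 * t ^ 3 + I4 * t ^ 4 := by
    intro t
    have hfun : (fun p => L p t * f p) = fun p =>
        g0 p * f p + t * (g1 p * f p) + t ^ 2 * (g2 p * f p) + t ^ 3 * (g3 p * f p)
          + t ^ 4 * (g4 p * f p) := by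
      funext p
      rw [hL, hg0, hg1, hg2, hg3, hg4]
      ring
    have A1 : ∫ p in R, (g0 p * f p + t * (g1 p * f p)) = I0 + t * I1 := by
      have hh := integral_add i0 (i1.const_mul t)
      rw [hh, integral_const_mul, hI0, hI1]
    have A2 : ∫ p in R, (g0 p * f p + t * (g1 p * f p) + t ^ 2 * (g2 p * f p))
        = I0 + t * I1 + t ^ 2 * I2 := by
      have hh := integral_add (i0.add (i1.const_mul t)) (i2.const_mul (t ^ 2))
      simp only [Pi.add_apply] at hh
      rw [hh, A1, integral_const_mul, hI2]
    have A3 : ∫ p in R, (g0 p * f p + t * (g1 p * f p) + t ^ 2 * (g2 p * f p)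
          + t ^ 3 * (g3 p * f p)) = I0 + t * I1 + t ^ 2 * I2 + t ^ 3 * I3 := by
      have hh := integral_add ((i0.add (i1.const_mul t)).add (i2.const_mul (t ^ 2)))
        (i3.const_mul (t ^ 3))
      simp only [Pi.add_apply] at hh
      rw [hh, A2, integral_const_mul, hI3]
    have A4 : ∫ p in R, (g0 p * f p + t * (g1 p * f p) + t ^ 2 * (g2 p * f p)
          + t ^ 3 * (g3 p * f p) + t ^ 4 * (g4 p * f p))
        = I0 + t * I1 + t ^ 2 * I2 + t ^ 3 * I3 + t ^ 4 * I4 := by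
      have hh := integral_add (((i0.add (i1.const_mul t)).add (i2.const_mul (t ^ 2))).add
        (i3.const_mul (t ^ 3))) (i4.const_mul (t ^ 4))
      simp only [Pi.add_apply] at hh
      rw [hh, A3, integral_const_mul, hI4]
    rw [hG, hfun, A4]; ring
  have hGfun : G = fun t => I0 + I1 * t + I2 * t ^ 2 + I3 * t ^ 3 + I4 * t ^ 4 :=
    funext key
  -- coefficient identities
  have e1 : a1 = 4 * I4 := by
    rw [ha1, hF, hI4, hg4]
    simp only [one_mul]
    rw [show (fun p : ℝ × ℝ => l * f p) = fun p => l * f p from rfl, integral_const_mul]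
    ring
  have e2 : a2 = 3 * I3 := by
    rw [ha2, hF, hI3, hg3,
      show (fun p : ℝ × ℝ => -4 * l * p.1 * f p) = fun p => (-4 * l) * (p.1 * f p) from
        funext fun p => by ring, integral_const_mul]
    ring
  have e3 : a3 = 2 * I2 := by
    rw [ha3, hF, hI2, hg2, ← integral_const_mul]
    congr 1
    funext p
    ring
  have e4 : a4 = I1 := by
    rw [ha4, hF, hI1, hg1, ← integral_neg]
    congr 1
    funext p
    ring
  have hder : ∀ t : ℝ, HasDerivAt G (a1 * t ^ 3 + a2 * t ^ 2 + a3 * t + a4) t := by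
    intro t
    rw [hGfun]
    have h' := ((((hasDerivAt_const t I0).add ((hasDerivAt_id' t).const_mul I1)).add
        ((hasDerivAt_pow 2 t).const_mul I2)).add
        ((hasDerivAt_pow 3 t).const_mul I3)).add ((hasDerivAt_pow 4 t).const_mul I4)
    refine h'.congr_deriv ?_
    rw [e1, e2, e3, e4]
    push_cast
    ring
  refine ⟨hder, fun t => ?_⟩
  rw [(hder t).deriv]
end

section
/- Let $D\subset\mathbb{R}^2$ be a bounded measurable set, $f:D\to\mathbb{R}$ a nonnegative integrable density, and let $\mu$ denote the measure with density $f$ with respect to Lebesgue measure. Let $K\geq 2$, let $F_1,\dots,F_K:D\to\mathbb{R}$ be nonnegative bounded measurable functions, and let $S:\mathbb{R}\to\mathbb{R}$ be differentiable. For a measurable partition $(C_1,\dots,C_K)$ of $D$, set $M_i=\mu(C_i)$ and $J(C_1,\dots,C_K)=\sum_{i=1}^K S(M_i)\int_{C_i}F_i\,d\mu$. Suppose $(C_1^*,\dots,C_K^*)$ minimizes $J$ over all measurable partitions of $D$. Then for every pair $i\neq j$, for $\mu$-almost every $(x,y)\in C_i^*$: $S(M_i)F_i(x,y)+S'(M_i)\int_{C_i^*}F_i\,d\mu\;\leq\;S(M_j)F_j(x,y)+S'(M_j)\int_{C_j^*}F_j\,d\mu$,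 where $M_i=\mu(C_i^*)$ and $M_j=\mu(C_j^*)$. -/
open MeasureTheory

/-- First-variation optimality condition of Lemma 1 of the paper: if the partition
`(C₁*, …, C_K*)` of the bounded region `D` minimizes the total power
`J(C) = ∑ᵢ S(μ(Cᵢ)) ∫_{Cᵢ} Fᵢ dμ` (with `μ` the user measure of density `f`), then
for every pair `i ≠ j` and μ-almost every point of `Cᵢ*`, the combined
transmission-plus-congestion cost of UAV `i` does not exceed that of UAV `j`. -/
theorem stmt_12 (D : Set (ℝ × ℝ)) (hDm : MeasurableSet D)
    (hDb : Bornology.IsBounded D)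
    (f : ℝ × ℝ → ℝ) (hf0 : ∀ p, 0 ≤ f p) (hfi : IntegrableOn f D)
    (μ : Measure (ℝ × ℝ))
    (hμ : μ = (volume.restrict D).withDensity (fun p => ENNReal.ofReal (f p)))
    (K : ℕ) (hK : 2 ≤ K)
    (F : Fin K → (ℝ × ℝ) → ℝ)
    (hF0 : ∀ i p, 0 ≤ F i p)
    (hFb : ∀ i, ∃ c : ℝ, ∀ p, F i p ≤ c)
    (hFm : ∀ i, Measurable (F i))
    (S : ℝ → ℝ) (hS : Differentiable ℝ S)
    (J : (Fin K → Set (ℝ × ℝ)) → ℝ)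
    (hJ : ∀ C : Fin K → Set (ℝ × ℝ),
      J C = ∑ i, S ((μ (C i)).toReal) * ∫ p in C i, F i p ∂μ)
    (IsPartition : (Fin K → Set (ℝ × ℝ)) → Prop)
    (hPart : ∀ C : Fin K → Set (ℝ × ℝ), IsPartition C ↔
      (∀ i, MeasurableSet (C i)) ∧
      (Pairwise fun i j => Disjoint (C i) (C j)) ∧
      (⋃ i, C i) = D)
    (Cstar : Fin K → Set (ℝ × ℝ))
    (hCstar : IsPartition Cstar)
    (hmin : ∀ C : Fin K → Set (ℝ × ℝ), IsPartition C → J Cstar ≤ J C) :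
    ∀ i j : Fin K, i ≠ j →
      ∀ᵐ p ∂(μ.restrict (Cstar i)),
        S ((μ (Cstar i)).toReal) * F i p +
            deriv S ((μ (Cstar i)).toReal) * ∫ z in Cstar i, F i z ∂μ ≤
          S ((μ (Cstar j)).toReal) * F j p +
            deriv S ((μ (Cstar j)).toReal) * ∫ z in Cstar j, F j z ∂μ := by
  obtain ⟨hCm, hCd, hCU⟩ := (hPart Cstar).mp hCstar
  have hCsub : ∀ k, Cstar k ⊆ D := fun k => hCU ▸ Set.subset_iUnion Cstar k
  -- μ is a finite measure
  haveI hfin : IsFiniteMeasure μ := by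
    constructor
    rw [hμ, withDensity_apply _ MeasurableSet.univ, Measure.restrict_univ]
    exact hfi.lintegral_lt_top
  -- μ is absolutely continuous w.r.t. volume
  have hac : μ ≪ (volume : Measure (ℝ × ℝ)) := by
    rw [hμ]
    exact (withDensity_absolutelyContinuous _ _).trans
      (Measure.absolutelyContinuous_of_le Measure.restrict_le_self)
  -- integrability of the F k
  have hFint : ∀ k, Integrable (F k) μ := by
    intro k
    obtain ⟨ck, hck⟩ := hFb k
    exact Integrable.mono' (integrable_const ck) (hFm k).aestronglyMeasurable
      (Filter.Eventually.of_forall fun p => by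
        rw [Real.norm_eq_abs, abs_of_nonneg (hF0 k p)]; exact hck p)
  intro i j hij
  set Mi := (μ (Cstar i)).toReal with hMi
  set Mj := (μ (Cstar j)).toReal with hMj
  set Ii := ∫ z in Cstar i, F i z ∂μ with hIi
  set Ij := ∫ z in Cstar j, F j z ∂μ with hIj
  set g : ℝ × ℝ → ℝ := fun p => S Mi * F i p - S Mj * F j p with hg
  set c : ℝ := deriv S Mj * Ij - deriv S Mi * Ii with hc
  by_contra hcon
  rw [Filter.eventually_iff, mem_ae_iff] at hcon
  -- the "bad" set has positive measure
  have hbad : μ ({p | c < g p} ∩ Cstar i) ≠ 0 := by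
    have hset : {p : ℝ × ℝ | S Mi * F i p + deriv S Mi * Ii ≤
        S Mj * F j p + deriv S Mj * Ij}ᶜ = {p | c < g p} := by
      ext p
      simp only [Set.mem_compl_iff, Set.mem_setOf_eq, not_le, hg, hc]
      constructor <;> intro h <;> linarith
    rwa [hset, Measure.restrict_apply' (hCm i)] at hcon
  -- find δ > 0 such that A0 := {c + δ ≤ g} ∩ Cᵢ has positive measure
  have hexδ : ∃ n : ℕ, μ ({p | c + 1 / (n + 1) ≤ g p} ∩ Cstar i) ≠ 0 := by
    by_contra hall
    push_neg at hall
    apply hbad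
    have hU : {p : ℝ × ℝ | c < g p} ∩ Cstar i ⊆
        ⋃ n : ℕ, {p | c + 1 / (n + 1) ≤ g p} ∩ Cstar i := by
      rintro p ⟨hp1, hp2⟩
      simp only [Set.mem_setOf_eq] at hp1
      obtain ⟨n, hn⟩ := exists_nat_one_div_lt (sub_pos.mpr hp1)
      exact Set.mem_iUnion.mpr ⟨n, ⟨by simp only [Set.mem_setOf_eq]; linarith, hp2⟩⟩
    exact measure_mono_null hU (by simpa using hall)
  obtain ⟨nδ, hnδ⟩ := hexδ
  set δ : ℝ := 1 / (nδ + 1) with hδdef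
  have hδ : 0 < δ := by positivity
  set A0 : Set (ℝ × ℝ) := {p | c + δ ≤ g p} ∩ Cstar i with hA0def
  have hA0m : MeasurableSet A0 := by
    apply MeasurableSet.inter _ (hCm i)
    exact measurableSet_le measurable_const
      (((hFm i).const_mul _).sub ((hFm j).const_mul _))
  have hA0pos : 0 < μ A0 := pos_iff_ne_zero.mpr hnδ
  have hA0sub : A0 ⊆ Cstar i := Set.inter_subset_right
  -- geometric construction of small subsets of positive measure
  obtain ⟨R, hR⟩ := isBounded_iff_forall_norm_le.mp hDb
  have hxbound : ∀ p ∈ D, |p.1| ≤ R := fun p hp =>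
    le_trans (by simpa using (norm_fst_le p)) (hR p hp)
  set T : Set ℝ := {t | 0 < μ (A0 ∩ {p | p.1 ≤ t})} with hTdef
  have hTne : T.Nonempty := by
    refine ⟨R, ?_⟩
    have : A0 ∩ {p | p.1 ≤ R} = A0 := by
      apply Set.inter_eq_self_of_subset_left
      intro p hp
      exact le_trans (le_abs_self _) (hxbound p (hCsub i (hA0sub hp)))
    simpa [hTdef, this] using hA0pos
  have hTbdd : BddBelow T := by
    refine ⟨-R - 1, fun t ht => ?_⟩
    by_contra hlt
    push_neg at hlt
    have : A0 ∩ {p | p.1 ≤ t} = ∅ := by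
      ext p
      simp only [Set.mem_inter_iff, Set.mem_setOf_eq, Set.mem_empty_iff_false, iff_false]
      rintro ⟨hp, hple⟩
      have := hxbound p (hCsub i (hA0sub hp))
      have := neg_abs_le p.1
      linarith
    rw [hTdef] at ht
    simp only [Set.mem_setOf_eq, this, measure_empty] at ht
    exact lt_irrefl _ ht
  set t₀ : ℝ := sInf T with ht₀
  have hbelow : ∀ t : ℝ, t < t₀ → μ (A0 ∩ {p | p.1 ≤ t}) = 0 := by
    intro t ht
    by_contra h
    exact absurd (csInf_le hTbdd (pos_iff_ne_zero.mpr h)) (not_le.mpr ht)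
  have habove : ∀ t : ℝ, t₀ < t → 0 < μ (A0 ∩ {p | p.1 ≤ t}) := by
    intro t ht
    obtain ⟨s, hs, hst⟩ := (csInf_lt_iff hTbdd hTne).mp ht
    exact lt_of_lt_of_le hs (measure_mono (Set.inter_subset_inter_right _
      (fun p hp => le_trans hp hst.le)))
  set B : ℕ → Set (ℝ × ℝ) := fun n =>
    A0 ∩ {p | t₀ - 1 / (n + 1) < p.1 ∧ p.1 ≤ t₀ + 1 / (n + 1)} with hBdef
  have hBm : ∀ n, MeasurableSet (B n) := by
    intro n
    apply hA0m.inter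
    exact MeasurableSet.inter
      (measurableSet_lt measurable_const (measurable_fst))
      (measurableSet_le (measurable_fst) measurable_const)
  have hBsub : ∀ n, B n ⊆ A0 := fun n => Set.inter_subset_left
  have hBpos : ∀ n, 0 < μ (B n) := by
    intro n
    have hu : (0:ℝ) < 1 / (n + 1) := by positivity
    have h1 : A0 ∩ {p | p.1 ≤ t₀ + 1 / (n + 1)} ⊆
        B n ∪ (A0 ∩ {p | p.1 ≤ t₀ - 1 / (n + 1)}) := by
      rintro p ⟨hp, hple⟩
      by_cases hcase : t₀ - 1 / (n + 1) < p.1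
      · exact Or.inl ⟨hp, hcase, hple⟩
      · exact Or.inr ⟨hp, not_lt.mp hcase⟩
    have h2 := hbelow (t₀ - 1 / (n + 1)) (by linarith)
    have h3 := habove (t₀ + 1 / (n + 1)) (by linarith)
    have h4 : μ (A0 ∩ {p | p.1 ≤ t₀ + 1 / (n + 1)}) ≤
        μ (B n) + μ (A0 ∩ {p | p.1 ≤ t₀ - 1 / (n + 1)}) :=
      (measure_mono h1).trans (measure_union_le _ _)
    rw [h2, add_zero] at h4
    exact lt_of_lt_of_le h3 h4
  have hBanti : Antitone B := by
    intro n m hnm p hp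
    obtain ⟨hp0, hp1, hp2⟩ := hp
    have : (1:ℝ) / (m + 1) ≤ 1 / (n + 1) := by
      apply one_div_le_one_div_of_le (by positivity)
      exact_mod_cast Nat.succ_le_succ hnm
    exact ⟨hp0, by constructor <;> linarith⟩
  have hBinter : μ (⋂ n, B n) = 0 := by
    have h0 : μ (({t₀} : Set ℝ) ×ˢ (Set.univ : Set ℝ)) = 0 := by
      apply hac
      rw [Measure.volume_eq_prod, Measure.prod_prod, Real.volume_singleton, zero_mul]
    apply measure_mono_null _ h0
    · rintro p hp
      simp only [Set.mem_iInter] at hp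
      have h1 : p.1 ≤ t₀ := by
        apply le_of_forall_pos_le_add
        intro e he
        obtain ⟨n, hn⟩ := exists_nat_one_div_lt he
        have := (hp n).2.2
        linarith
      have h2 : t₀ ≤ p.1 := by
        apply le_of_forall_pos_le_add
        intro e he
        obtain ⟨n, hn⟩ := exists_nat_one_div_lt he
        have := (hp n).2.1
        linarith
      exact ⟨le_antisymm h1 h2 ▸ rfl, Set.mem_univ _⟩
  have hBtend : Filter.Tendsto (fun n => μ (B n)) Filter.atTop (nhds 0) := by
    have := MeasureTheory.tendsto_measure_iInter_atTop
      (fun n => (hBm n).nullMeasurableSet) hBanti ⟨0, measure_ne_top μ _⟩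
    rwa [hBinter] at this
  set ε : ℕ → ℝ := fun n => (μ (B n)).toReal with hεdef
  have hεpos : ∀ n, 0 < ε n := fun n =>
    ENNReal.toReal_pos (hBpos n).ne' (measure_ne_top μ _)
  have hεtend : Filter.Tendsto ε Filter.atTop (nhds 0) := by
    have := (ENNReal.tendsto_toReal (a := 0) (by simp)).comp hBtend
    exact this
  -- a uniform bound on F i and F j
  obtain ⟨ci, hci⟩ := hFb i
  obtain ⟨cj, hcj⟩ := hFb j
  set cF : ℝ := max (max ci cj) 0 with hcF
  have hcF0 : 0 ≤ cF := le_max_right _ _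
  have hcFi : ∀ p, F i p ≤ cF := fun p => le_trans (hci p) (le_trans (le_max_left _ _) (le_max_left _ _))
  have hcFj : ∀ p, F j p ≤ cF := fun p => le_trans (hcj p) (le_trans (le_max_right _ _) (le_max_left _ _))
  -- the key inequality from optimality, for each n
  have hkey : ∀ n : ℕ, (c + δ) * ε n ≤
      (S (Mi - ε n) - S Mi) * Ii + (S (Mj + ε n) - S Mj) * Ij +
        |S Mi - S (Mi - ε n)| * (cF * ε n) + |S (Mj + ε n) - S Mj| * (cF * ε n) := by
    intro n
    set A : Set (ℝ × ℝ) := B n with hA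
    have hAm : MeasurableSet A := hBm n
    have hAsubi : A ⊆ Cstar i := fun p hp => hA0sub (hBsub n hp)
    have hAsubg : A ⊆ {p | c + δ ≤ g p} := fun p hp => (hBsub n hp).1
    have hεA : ε n = (μ A).toReal := rfl
    have hAdisj : ∀ k, k ≠ i → Disjoint A (Cstar k) := fun k hk =>
      Disjoint.mono_left hAsubi (hCd (Ne.symm hk))
    -- the perturbed partition
    set C' : Fin K → Set (ℝ × ℝ) := fun k =>
      if k = i then Cstar i \ A else if k = j then Cstar j ∪ A else Cstar k with hC'
    have hC'i : C' i = Cstar i \ A := by simp [hC']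
    have hC'j : C' j = Cstar j ∪ A := by simp [hC', Ne.symm hij]
    have hC'k : ∀ k, k ≠ i → k ≠ j → C' k = Cstar k := by
      intro k h1 h2; simp [hC', h1, h2]
    have hC'part : IsPartition C' := by
      rw [hPart]
      refine ⟨?_, ?_, ?_⟩
      · intro k
        by_cases h1 : k = i
        · subst h1; rw [hC'i]; exact (hCm k).diff hAm
        · by_cases h2 : k = j
          · subst h2; rw [hC'j]; exact (hCm k).union hAm
          · rw [hC'k k h1 h2]; exact hCm k
      · intro a b hab
        by_cases ha1 : a = i
        · subst ha1
          by_cases hb1 : b = j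
          · subst hb1; rw [hC'i, hC'j]
            refine Set.disjoint_union_right.mpr ⟨?_, ?_⟩
            · exact (hCd hij).mono_left Set.diff_subset
            · exact disjoint_sdiff_self_left
          · rw [hC'i, hC'k b (Ne.symm hab) hb1]
            exact (hCd hab).mono_left Set.diff_subset
        · by_cases ha2 : a = j
          · subst ha2
            by_cases hb1 : b = i
            · subst hb1; rw [hC'j, hC'i]
              refine Set.disjoint_union_left.mpr ⟨?_, ?_⟩
              · exact (hCd (Ne.symm hij)).mono_right Set.diff_subset
              · exact disjoint_sdiff_self_right
            · rw [hC'j, hC'k b hb1 (Ne.symm hab)]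
              exact Set.disjoint_union_left.mpr ⟨hCd hab, hAdisj b hb1⟩
          · rw [hC'k a ha1 ha2]
            by_cases hb1 : b = i
            · subst hb1; rw [hC'i]
              exact (hCd hab).mono_right Set.diff_subset
            · by_cases hb2 : b = j
              · subst hb2; rw [hC'j]
                exact Set.disjoint_union_right.mpr ⟨hCd hab, (hAdisj a ha1).symm⟩
              · rw [hC'k b hb1 hb2]; exact hCd hab
      · apply Set.Subset.antisymm
        · apply Set.iUnion_subset
          intro k
          by_cases h1 : k = i
          · subst h1; rw [hC'i]
            exact (Set.diff_subset).trans (hCsub k)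
          · by_cases h2 : k = j
            · subst h2; rw [hC'j]
              exact Set.union_subset (hCsub k) (hAsubi.trans (hCsub i))
            · rw [hC'k k h1 h2]; exact hCsub k
        · intro p hp
          rw [← hCU] at hp
          obtain ⟨k, hk⟩ := Set.mem_iUnion.mp hp
          by_cases h1 : k = i
          · subst h1
            by_cases hpA : p ∈ A
            · exact Set.mem_iUnion.mpr ⟨j, by rw [hC'j]; exact Or.inr hpA⟩
            · exact Set.mem_iUnion.mpr ⟨k, by rw [hC'i]; exact ⟨hk, hpA⟩⟩
          · by_cases h2 : k = j
            · subst h2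
              exact Set.mem_iUnion.mpr ⟨k, by rw [hC'j]; exact Or.inl hk⟩
            · exact Set.mem_iUnion.mpr ⟨k, by rw [hC'k k h1 h2]; exact hk⟩
    have hle := hmin C' hC'part
    rw [hJ Cstar, hJ C'] at hle
    have hsplit : ∀ u : Fin K → ℝ,
        ∑ k, u k = ∑ k ∈ Finset.univ \ ({i, j} : Finset (Fin K)), u k + (u i + u j) := by
      intro u
      rw [← Finset.sum_sdiff (Finset.subset_univ ({i, j} : Finset (Fin K))),
        Finset.sum_pair hij]
    rw [hsplit (fun k => S ((μ (Cstar k)).toReal) * ∫ p in Cstar k, F k p ∂μ),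
      hsplit (fun k => S ((μ (C' k)).toReal) * ∫ p in C' k, F k p ∂μ)] at hle
    have hagree : ∑ k ∈ Finset.univ \ ({i, j} : Finset (Fin K)),
          (S ((μ (C' k)).toReal) * ∫ p in C' k, F k p ∂μ)
        = ∑ k ∈ Finset.univ \ ({i, j} : Finset (Fin K)),
          (S ((μ (Cstar k)).toReal) * ∫ p in Cstar k, F k p ∂μ) := by
      apply Finset.sum_congr rfl
      intro k hk
      simp only [Finset.mem_sdiff, Finset.mem_univ, Finset.mem_insert,
        Finset.mem_singleton, true_and] at hk
      push_neg at hk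
      rw [hC'k k hk.1 hk.2]
    rw [hagree] at hle
    have hle2 := le_of_add_le_add_left hle
    rw [hC'i, hC'j] at hle2
    -- measure computations
    have hμi' : (μ (Cstar i \ A)).toReal = Mi - ε n := by
      rw [measure_diff hAsubi hAm.nullMeasurableSet (measure_ne_top μ A),
        ENNReal.toReal_sub_of_le (measure_mono hAsubi) (measure_ne_top μ _)]
    have hdisjjA : Disjoint (Cstar j) A :=
      Disjoint.mono_right hAsubi (hCd (Ne.symm hij))
    have hμj' : (μ (Cstar j ∪ A)).toReal = Mj + ε n := by
      rw [measure_union hdisjjA hAm,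
        ENNReal.toReal_add (measure_ne_top μ _) (measure_ne_top μ _)]
    -- integral computations
    set aI := ∫ z in A, F i z ∂μ with haIdef
    set aJ := ∫ z in A, F j z ∂μ with haJdef
    have hIi' : (∫ p in Cstar i \ A, F i p ∂μ) = Ii - aI := by
      have hun : (Cstar i \ A) ∪ A = Cstar i := Set.diff_union_of_subset hAsubi
      have h := setIntegral_union (disjoint_sdiff_self_left) hAm
        ((hFint i).integrableOn (s := Cstar i \ A)) ((hFint i).integrableOn (s := A))
      rw [hun] at h
      rw [hIi, h]; ring
    have hIj' : (∫ p in Cstar j ∪ A, F j p ∂μ) = Ij + aJ :=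
      setIntegral_union hdisjjA hAm ((hFint j).integrableOn) ((hFint j).integrableOn)
    rw [hμi', hμj', hIi', hIj'] at hle2
    -- bounds on aI, aJ
    have haI0 : 0 ≤ aI := setIntegral_nonneg hAm fun p _ => hF0 i p
    have haJ0 : 0 ≤ aJ := setIntegral_nonneg hAm fun p _ => hF0 j p
    have haIle : aI ≤ cF * ε n := by
      have h := setIntegral_mono_on ((hFint i).integrableOn)
        ((integrable_const cF).integrableOn) hAm fun p _ => hcFi p
      rwa [setIntegral_const, smul_eq_mul, measureReal_def, ← hεA, mul_comm] at h
    have haJle : aJ ≤ cF * ε n := by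
      have h := setIntegral_mono_on ((hFint j).integrableOn)
        ((integrable_const cF).integrableOn) hAm fun p _ => hcFj p
      rwa [setIntegral_const, smul_eq_mul, measureReal_def, ← hεA, mul_comm] at h
    -- lower bound on ∫_A g
    have hglow : (c + δ) * ε n ≤ S Mi * aI - S Mj * aJ := by
      have hgint : IntegrableOn g A μ :=
        (((hFint i).const_mul (S Mi)).sub ((hFint j).const_mul (S Mj))).integrableOn
      have h1 := setIntegral_mono_on ((integrable_const (c + δ)).integrableOn)
        hgint hAm fun p hp => hAsubg hp
      rw [setIntegral_const, smul_eq_mul, measureReal_def, ← hεA] at h1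
      have h2 : (∫ p in A, g p ∂μ) = S Mi * aI - S Mj * aJ := by
        rw [hg]
        rw [integral_sub (((hFint i).const_mul (S Mi)).integrableOn)
          (((hFint j).const_mul (S Mj)).integrableOn),
          integral_const_mul, integral_const_mul]
      rw [h2] at h1
      calc (c + δ) * ε n = ε n * (c + δ) := by ring
        _ ≤ S Mi * aI - S Mj * aJ := h1
    -- absolute value bounds
    have h1 : (S Mi - S (Mi - ε n)) * aI ≤ |S Mi - S (Mi - ε n)| * (cF * ε n) :=
      calc (S Mi - S (Mi - ε n)) * aI
          ≤ |S Mi - S (Mi - ε n)| * aI :=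
            mul_le_mul_of_nonneg_right (le_abs_self _) haI0
        _ ≤ |S Mi - S (Mi - ε n)| * (cF * ε n) :=
            mul_le_mul_of_nonneg_left haIle (abs_nonneg _)
    have h2 : (S (Mj + ε n) - S Mj) * aJ ≤ |S (Mj + ε n) - S Mj| * (cF * ε n) :=
      calc (S (Mj + ε n) - S Mj) * aJ
          ≤ |S (Mj + ε n) - S Mj| * aJ :=
            mul_le_mul_of_nonneg_right (le_abs_self _) haJ0
        _ ≤ |S (Mj + ε n) - S Mj| * (cF * ε n) :=
            mul_le_mul_of_nonneg_left haJle (abs_nonneg _)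
    have e1 : ((S (Mi - ε n) - S Mi) * Ii + (S (Mj + ε n) - S Mj) * Ij
          + (S Mi - S (Mi - ε n)) * aI + (S (Mj + ε n) - S Mj) * aJ)
          - (S Mi * aI - S Mj * aJ)
        = S (Mi - ε n) * (Ii - aI) + S (Mj + ε n) * (Ij + aJ)
          - (S Mi * Ii + S Mj * Ij) := by ring
    linarith [hle2, hglow, h1, h2, e1]
  -- divide by ε n
  set ψ : ℝ → ℝ := fun e =>
    (S (Mi - e) - S Mi) / e * Ii + (S (Mj + e) - S Mj) / e * Ij +
      cF * |S Mi - S (Mi - e)| + cF * |S (Mj + e) - S Mj| with hψ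
  have hkey2 : ∀ n : ℕ, c + δ ≤ ψ (ε n) := by
    intro n
    have hε := hεpos n
    have h := hkey n
    show c + δ ≤ (S (Mi - ε n) - S Mi) / ε n * Ii + (S (Mj + ε n) - S Mj) / ε n * Ij +
      cF * |S Mi - S (Mi - ε n)| + cF * |S (Mj + ε n) - S Mj|
    have heq : (S (Mi - ε n) - S Mi) / ε n * Ii + (S (Mj + ε n) - S Mj) / ε n * Ij +
        cF * |S Mi - S (Mi - ε n)| + cF * |S (Mj + ε n) - S Mj| =
        ((S (Mi - ε n) - S Mi) * Ii + (S (Mj + ε n) - S Mj) * Ij +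
          |S Mi - S (Mi - ε n)| * (cF * ε n) + |S (Mj + ε n) - S Mj| * (cF * ε n)) / ε n := by
      field_simp
    rw [heq, le_div_iff₀ hε]
    exact h
  -- the limit of ψ (ε n) is c
  have hψtend : Filter.Tendsto (fun n => ψ (ε n)) Filter.atTop (nhds c) := by
    have hεW : Filter.Tendsto ε Filter.atTop (nhdsWithin (0:ℝ) (Set.Ioi 0)) :=
      tendsto_nhdsWithin_of_tendsto_nhds_of_eventually_within ε hεtend
        (Filter.Eventually.of_forall fun n => hεpos n)
    -- the map e ↦ Mi - e into the punctured neighborhood of Mi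
    have hmapi : Filter.Tendsto (fun e : ℝ => Mi - e) (nhdsWithin (0:ℝ) (Set.Ioi 0))
        (nhdsWithin Mi {Mi}ᶜ) := by
      apply tendsto_nhdsWithin_of_tendsto_nhds_of_eventually_within
      · have : Filter.Tendsto (fun e : ℝ => Mi - e) (nhds 0) (nhds (Mi - 0)) :=
          (continuous_const.sub continuous_id).tendsto 0
        simpa using this.mono_left nhdsWithin_le_nhds
      · filter_upwards [self_mem_nhdsWithin] with e he
        simp only [Set.mem_Ioi] at he
        simp only [Set.mem_compl_iff, Set.mem_singleton_iff]
        intro h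
        nlinarith [he]
    have hmapj : Filter.Tendsto (fun e : ℝ => Mj + e) (nhdsWithin (0:ℝ) (Set.Ioi 0))
        (nhdsWithin Mj {Mj}ᶜ) := by
      apply tendsto_nhdsWithin_of_tendsto_nhds_of_eventually_within
      · have : Filter.Tendsto (fun e : ℝ => Mj + e) (nhds 0) (nhds (Mj + 0)) :=
          (continuous_const.add continuous_id).tendsto 0
        simpa using this.mono_left nhdsWithin_le_nhds
      · filter_upwards [self_mem_nhdsWithin] with e he
        simp only [Set.mem_Ioi] at he
        simp only [Set.mem_compl_iff, Set.mem_singleton_iff]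
        intro h
        nlinarith [he]
    have hsli : Filter.Tendsto (fun e : ℝ => (S (Mi - e) - S Mi) / e)
        (nhdsWithin (0:ℝ) (Set.Ioi 0)) (nhds (-(deriv S Mi))) := by
      have h1 := (hasDerivAt_iff_tendsto_slope.mp (hS Mi).hasDerivAt).comp hmapi
      have h2 : (fun e : ℝ => (S (Mi - e) - S Mi) / e) =
          fun e : ℝ => -(slope S Mi (Mi - e)) := by
        funext e
        rw [slope_def_field, show Mi - e - Mi = -e by ring, div_neg, neg_neg]
      rw [h2]
      exact h1.neg
    have hslj : Filter.Tendsto (fun e : ℝ => (S (Mj + e) - S Mj) / e)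
        (nhdsWithin (0:ℝ) (Set.Ioi 0)) (nhds (deriv S Mj)) := by
      have h1 := (hasDerivAt_iff_tendsto_slope.mp (hS Mj).hasDerivAt).comp hmapj
      have h2 : (fun e : ℝ => (S (Mj + e) - S Mj) / e) =
          fun e : ℝ => slope S Mj (Mj + e) := by
        funext e
        rw [slope_def_field, show Mj + e - Mj = e by ring]
      rw [h2]
      exact h1
    have hconti : Filter.Tendsto (fun e : ℝ => cF * |S Mi - S (Mi - e)|)
        (nhdsWithin (0:ℝ) (Set.Ioi 0)) (nhds 0) := by
      have h1 : Filter.Tendsto (fun e : ℝ => S (Mi - e)) (nhdsWithin (0:ℝ) (Set.Ioi 0))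
          (nhds (S Mi)) := by
        have := (hS.continuous.tendsto Mi).comp (hmapi.mono_right nhdsWithin_le_nhds)
        exact this
      have h2 : Filter.Tendsto (fun e : ℝ => cF * |S Mi - S (Mi - e)|)
          (nhdsWithin (0:ℝ) (Set.Ioi 0)) (nhds (cF * |S Mi - S Mi|)) :=
        ((tendsto_const_nhds.sub h1).abs).const_mul cF
      simpa using h2
    have hcontj : Filter.Tendsto (fun e : ℝ => cF * |S (Mj + e) - S Mj|)
        (nhdsWithin (0:ℝ) (Set.Ioi 0)) (nhds 0) := by
      have h1 : Filter.Tendsto (fun e : ℝ => S (Mj + e)) (nhdsWithin (0:ℝ) (Set.Ioi 0))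
          (nhds (S Mj)) := by
        exact (hS.continuous.tendsto Mj).comp (hmapj.mono_right nhdsWithin_le_nhds)
      have h2 : Filter.Tendsto (fun e : ℝ => cF * |S (Mj + e) - S Mj|)
          (nhdsWithin (0:ℝ) (Set.Ioi 0)) (nhds (cF * |S Mj - S Mj|)) :=
        ((h1.sub tendsto_const_nhds).abs).const_mul cF
      simpa using h2
    have hΦ : Filter.Tendsto ψ (nhdsWithin (0:ℝ) (Set.Ioi 0))
        (nhds (-(deriv S Mi) * Ii + deriv S Mj * Ij + 0 + 0)) := by
      rw [hψ]
      exact (((hsli.mul_const Ii).add (hslj.mul_const Ij)).add hconti).add hcontj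
    have hceq : -(deriv S Mi) * Ii + deriv S Mj * Ij + 0 + 0 = c := by
      rw [hc]; ring
    rw [hceq] at hΦ
    exact hΦ.comp hεW
  have : c + δ ≤ c := ge_of_tendsto hψtend (Filter.Eventually.of_forall hkey2)
  linarith
end
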